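/- Let γ ∈ (1/2, 1], let f(x) := γ·sin x − 2(1−γ)·sin(x/2), let θ* := 2·arccos((1−γ+√((1−γ)²+8γ²))/(4γ)), let κ > 0 and D > 0 with D/κ < f(θ*), and let φ₁ denote the smallest solution of f(φ) = D/κ in the interval (0, 2·arccos((1−γ)/γ)). Then: (1) φ₁ < (3π/(4(2γ−1)))·(D/κ); (2) arccos((1−γ)/γ) ≤ θ*; (3) f(arccos((1−γ)/γ)) = ((2γ−1)^{3/2}/√(2γ))·((2−γ)/(√(γ/2)+(1−γ))). -/

import Mathlib

set_option maxHeartbeats 1600000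

/-- Estimates on the roots of `f(φ) = D/κ` (Lemma 4.3) for
`f(x) = γ sin x − 2(1−γ) sin(x/2)`, `γ ∈ (1/2, 1]`:
(1) the smallest root `φ₁` in `(0, 2 arccos((1−γ)/γ))` satisfies
`φ₁ < (3π/(4(2γ−1)))·(D/κ)`; (2) `arccos((1−γ)/γ) ≤ θ*`;
(3) `f(arccos((1−γ)/γ)) = ((2γ−1)^{3/2}/√(2γ))·((2−γ)/(√(γ/2)+(1−γ)))`. -/
theorem kuramoto_root_estimates (γ : ℝ) (hγ₁ : 1 / 2 < γ) (hγ₂ : γ ≤ 1)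
    (f : ℝ → ℝ) (hf : ∀ x, f x = γ * Real.sin x - 2 * (1 - γ) * Real.sin (x / 2))
    (θs : ℝ)
    (hθs : θs = 2 * Real.arccos ((1 - γ + Real.sqrt ((1 - γ) ^ 2 + 8 * γ ^ 2)) / (4 * γ)))
    (κ D : ℝ) (hκ : 0 < κ) (hD : 0 < D) (hDκ : D / κ < f θs)
    (φ₁ : ℝ) (hφ₁mem : φ₁ ∈ Set.Ioo 0 (2 * Real.arccos ((1 - γ) / γ)))
    (hφ₁root : f φ₁ = D / κ)
    (hφ₁min : ∀ x ∈ Set.Ioo 0 (2 * Real.arccos ((1 - γ) / γ)), f x = D / κ → φ₁ ≤ x) :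
    φ₁ < 3 * Real.pi / (4 * (2 * γ - 1)) * (D / κ) ∧
    Real.arccos ((1 - γ) / γ) ≤ θs ∧
    f (Real.arccos ((1 - γ) / γ)) =
      (2 * γ - 1) ^ ((3 : ℝ) / 2) / Real.sqrt (2 * γ) *
        ((2 - γ) / (Real.sqrt (γ / 2) + (1 - γ))) := by
  have hγ0 : (0:ℝ) < γ := by linarith
  have hπ := Real.pi_pos
  set b : ℝ := (1 - γ) / γ with hbdef
  have hb0 : 0 ≤ b := div_nonneg (by linarith) hγ0.le
  have hb1 : b < 1 := (div_lt_one hγ0).mpr (by linarith)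
  have hγb : γ * b = 1 - γ := by rw [hbdef]; field_simp
  set S : ℝ := Real.sqrt ((1 - γ) ^ 2 + 8 * γ ^ 2) with hSdef
  have hS0 : 0 ≤ S := Real.sqrt_nonneg _
  have hS2 : S ^ 2 = (1 - γ) ^ 2 + 8 * γ ^ 2 := Real.sq_sqrt (by positivity)
  have hS3 : 3 * (1 - γ) < S := by nlinarith [hS2, hS0]
  have hS7 : 7 * γ + 1 < 3 * S := by nlinarith [hS2, hS0, sq_nonneg (2*γ - 1)]
  set c : ℝ := (1 - γ + S) / (4 * γ) with hcdef
  have hSeq : S = 4 * γ * c - (1 - γ) := by rw [hcdef]; field_simp; ring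
  have hbc : b < c := by
    rw [hbdef, hcdef, div_lt_div_iff₀ hγ0 (by linarith)]
    nlinarith
  have hc0 : 0 ≤ c := hb0.trans hbc.le
  have hc1 : c < 1 := by
    rw [hcdef, div_lt_one (by linarith)]
    nlinarith
  have hE : (4*γ*c - (1-γ))^2 = (1-γ)^2 + 8*γ^2 := by rw [← hSeq]; exact hS2
  have h2c : γ * (2*c^2 - 1) = (1-γ) * c := by
    have h8 : 8*γ*(γ*(2*c^2-1) - (1-γ)*c) = 0 := by linear_combination hE
    have hne : (8:ℝ)*γ ≠ 0 := by positivity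
    have := (mul_eq_zero.mp h8).resolve_left hne
    linarith
  set α : ℝ := Real.arccos b with hαdef
  have hα0 : 0 < α := Real.arccos_pos.mpr hb1
  have hαπ2 : α ≤ Real.pi / 2 := Real.arccos_le_pi_div_two.mpr hb0
  have hcosα : Real.cos α = b := Real.cos_arccos (by linarith) hb1.le
  set t : ℝ := Real.arccos c with htdef
  have hθs2 : θs = 2 * t := hθs
  have ht0 : 0 < t := Real.arccos_pos.mpr hc1
  have htπ2 : t ≤ Real.pi / 2 := Real.arccos_le_pi_div_two.mpr hc0
  have hcost : Real.cos t = c := Real.cos_arccos (by linarith) hc1.le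
  set s : ℝ := Real.sqrt (1 - c^2) with hsdef
  have hsint : Real.sin t = s := Real.sin_arccos c
  have hs0 : 0 < s := Real.sqrt_pos.mpr (by nlinarith)
  -- Part 2 : α ≤ θs
  have hcosθs : Real.cos θs = b * c := by
    rw [hθs2, Real.cos_two_mul, hcost]
    have hγeq : γ * (2*c^2 - 1) = γ * (b*c) := by rw [h2c, ← hγb]; ring
    exact mul_left_cancel₀ hγ0.ne' hγeq
  have hP2 : α ≤ θs := by
    have hbcle : b*c ≤ b := by nlinarith
    have hbcm : b*c ∈ Set.Icc (-1:ℝ) 1 := ⟨by nlinarith, by nlinarith⟩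
    have hbm : b ∈ Set.Icc (-1:ℝ) 1 := ⟨by linarith, hb1.le⟩
    have hmono : Real.arccos b ≤ Real.arccos (b*c) :=
      Real.strictAntiOn_arccos.antitoneOn hbcm hbm hbcle
    have hθeq : Real.arccos (Real.cos θs) = θs :=
      Real.arccos_cos (by rw [hθs2]; linarith) (by rw [hθs2]; linarith)
    rw [hcosθs] at hθeq
    calc α ≤ Real.arccos (b*c) := hmono
    _ = θs := hθeq
  -- θs < 2α
  have hθlt2α : θs < 2 * α := by
    have h := Real.strictAntiOn_arccos ⟨by linarith, hb1.le⟩ ⟨by linarith, hc1.le⟩ hbc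
    rw [hθs2]; linarith
  -- Part 3 : value at α
  set r : ℝ := Real.sqrt (2*γ - 1) with hrdef
  have hr2 : r^2 = 2*γ - 1 := Real.sq_sqrt (by linarith)
  have hr0 : 0 < r := Real.sqrt_pos.mpr (by linarith)
  set q : ℝ := Real.sqrt (γ/2) with hqdef
  have hq2 : q^2 = γ/2 := Real.sq_sqrt (by linarith)
  have hq0 : 0 < q := Real.sqrt_pos.mpr (by linarith)
  have hu2q : Real.sqrt (2*γ) = 2 * q := by
    rw [show (2*γ) = (2:ℝ)^2 * (γ/2) by ring, Real.sqrt_mul (by positivity),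
      Real.sqrt_sq (by norm_num)]
  have hb2 : 1 - b^2 = (r/γ)^2 := by
    rw [hbdef]; field_simp; linear_combination -hr2
  have hb3 : (1 - b)/2 = (r/(2*q))^2 := by
    rw [hbdef]; field_simp; linear_combination (2*(2*γ-1))*hq2 - γ*hr2
  have hsinα : Real.sin α = r / γ := by
    rw [hαdef, Real.sin_arccos, hb2, Real.sqrt_sq (div_nonneg hr0.le hγ0.le)]
  have hsinα2 : Real.sin (α/2) = r / (2*q) := by
    rw [Real.sin_half_eq_sqrt (by linarith) (by linarith),
      hcosα, hb3, Real.sqrt_sq (by positivity)]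
  have h32 : (2*γ-1) ^ ((3:ℝ)/2) = (2*γ-1) * r := by
    rw [show (3:ℝ)/2 = 1 + 1/2 by norm_num, Real.rpow_add (by linarith),
      Real.rpow_one, hrdef, Real.sqrt_eq_rpow]
  have hden : 0 < q + (1-γ) := by linarith
  have hP3 : f α = (2*γ-1) ^ ((3:ℝ)/2) / Real.sqrt (2*γ) * ((2-γ)/(q + (1-γ))) := by
    rw [hf, hsinα, hsinα2, h32, hu2q]
    have key : (2*q - 2*(1-γ)) * (q + (1-γ)) = (2*γ-1)*(2-γ) := by
      linear_combination 2*hq2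
    field_simp
    linear_combination r * key + (2 - 2*r) * hq2
  -- Part 1
  have hcval : 0 < D / κ := div_pos hD hκ
  have hfθpos : 0 < f θs := lt_trans hcval hDκ
  -- f θs closed form
  have hfθs : f θs = 2*s*(γ*c - (1-γ)) := by
    rw [hf, hθs2, show (2*t)/2 = t by ring, Real.sin_two_mul, hcost, hsint]
    ring
  -- continuity and concavity
  have hfe : f = fun x => γ * Real.sin x - 2*(1-γ) * Real.sin (x/2) := funext hf
  have hcont : Continuous f := by rw [hfe]; fun_prop
  have hconc : StrictConcaveOn ℝ (Set.Icc 0 (2*α)) f := by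
    apply strictConcaveOn_of_deriv2_neg (convex_Icc _ _) hcont.continuousOn
    intro x hx
    rw [interior_Icc] at hx
    obtain ⟨hx0, hx2α⟩ := hx
    have hd1 : deriv f = fun y => γ * Real.cos y - (1-γ) * Real.cos (y/2) := by
      funext y
      have h2 : HasDerivAt (fun z : ℝ => Real.sin (z/2)) (Real.cos (y/2) * (1/2)) y := by
        simpa [Function.comp_def] using (Real.hasDerivAt_sin (y/2)).comp y ((hasDerivAt_id y).div_const 2)
      have h := ((Real.hasDerivAt_sin y).const_mul γ).sub (h2.const_mul (2*(1-γ)))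
      rw [hfe]
      convert h.deriv using 1
      · rfl
      · ring
    have hd2 : deriv (deriv f) x = -(γ * Real.sin x) + (1-γ)/2 * Real.sin (x/2) := by
      rw [hd1]
      have h2 : HasDerivAt (fun z : ℝ => Real.cos (z/2)) (-Real.sin (x/2) * (1/2)) x := by
        simpa [Function.comp_def] using (Real.hasDerivAt_cos (x/2)).comp x ((hasDerivAt_id x).div_const 2)
      have h := ((Real.hasDerivAt_cos x).const_mul γ).sub (h2.const_mul (1-γ))
      convert h.deriv using 1
      · rfl
      · ring
    simp only [Function.iterate_succ, Function.iterate_zero, Function.comp_apply, id_eq]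
    rw [hd2]
    have hsx2 : 0 < Real.sin (x/2) :=
      Real.sin_pos_of_pos_of_lt_pi (by linarith) (by linarith)
    have hcx2 : b < Real.cos (x/2) := by
      rw [← hcosα]
      exact Real.cos_lt_cos_of_nonneg_of_le_pi (by linarith) (by linarith) (by linarith)
    have hsinx : Real.sin x = 2 * Real.sin (x/2) * Real.cos (x/2) := by
      rw [show x = 2*(x/2) by ring, Real.sin_two_mul]
      ring_nf
    rw [hsinx]
    have hprod : γ * b < γ * Real.cos (x/2) := mul_lt_mul_of_pos_left hcx2 hγ0
    have hkey : (1-γ)/2 - 2*γ*Real.cos (x/2) < 0 := by linarith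
    have hfac : -(γ * (2 * Real.sin (x/2) * Real.cos (x/2))) + (1-γ)/2 * Real.sin (x/2)
        = Real.sin (x/2) * ((1-γ)/2 - 2*γ*Real.cos (x/2)) := by ring
    rw [hfac]
    exact mul_neg_of_pos_of_neg hsx2 hkey
  -- IVT: a root below θs
  have hθpos : 0 < θs := by rw [hθs2]; linarith
  have hf0 : f 0 = 0 := by rw [hf]; simp
  have hmem : D/κ ∈ Set.Ioo (f 0) (f θs) := by rw [hf0]; exact ⟨hcval, hDκ⟩
  obtain ⟨x₀, hx₀mem, hfx₀⟩ := intermediate_value_Ioo hθpos.le hcont.continuousOn hmem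
  have hφθ : φ₁ < θs :=
    lt_of_le_of_lt (hφ₁min x₀ ⟨hx₀mem.1, hx₀mem.2.trans hθlt2α⟩ hfx₀) hx₀mem.2
  have hφ0 : 0 < φ₁ := hφ₁mem.1
  -- chord inequality from concavity
  have hchord : (φ₁/θs) * f θs ≤ f φ₁ := by
    have h0mem : (0:ℝ) ∈ Set.Icc 0 (2*α) := by constructor <;> linarith
    have hθmem : θs ∈ Set.Icc 0 (2*α) := by constructor <;> linarith
    have hτ0 : 0 ≤ φ₁/θs := by positivity
    have hτ1 : φ₁/θs ≤ 1 := by rw [div_le_one hθpos]; linarith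
    have h := hconc.concaveOn.2 h0mem hθmem (by linarith : (0:ℝ) ≤ 1 - φ₁/θs) hτ0 (by ring)
    simp only [smul_eq_mul, mul_zero, zero_add, hf0, mul_zero, zero_add] at h
    rw [div_mul_cancel₀ _ hθpos.ne'] at h
    linarith
  -- θs ≤ π s
  have hθπs : θs ≤ Real.pi * s := by
    have h1 := Real.mul_le_sin ht0.le htπ2
    rw [hsint] at h1
    have h3 : Real.pi * (2/Real.pi*t) ≤ Real.pi * s := mul_le_mul_of_nonneg_left h1 hπ.le
    have h4 : Real.pi * (2/Real.pi*t) = 2*t := by field_simp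
    rw [hθs2]; linarith
  -- γ c - (1-γ) = (S - 3(1-γ))/4 > 0
  have hγc : γ*c - (1-γ) = (S - 3*(1-γ))/4 := by rw [hSeq]; ring
  have hγcpos : 0 < γ*c - (1-γ) := by rw [hγc]; linarith
  -- key strict inequality : θs < K * f θs
  have hK : θs < 3*Real.pi/(4*(2*γ-1)) * f θs := by
    have h2γ1 : (0:ℝ) < 2*γ - 1 := by linarith
    have hrhs : 3*Real.pi/(4*(2*γ-1)) * f θs
        = (Real.pi*s) * (3*(S-3*(1-γ))/(8*(2*γ-1))) := by
      rw [hfθs, hγc]; field_simp; ring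
    rw [hrhs]
    have hcoef : 1 < 3*(S-3*(1-γ))/(8*(2*γ-1)) := by
      rw [lt_div_iff₀ (by linarith)]; linarith
    calc θs ≤ Real.pi * s := hθπs
    _ = (Real.pi*s) * 1 := by ring
    _ < (Real.pi*s) * (3*(S-3*(1-γ))/(8*(2*γ-1))) :=
        mul_lt_mul_of_pos_left hcoef (mul_pos hπ hs0)
  -- conclude part 1
  have hP1 : φ₁ < 3 * Real.pi / (4 * (2 * γ - 1)) * (D / κ) := by
    rw [hφ₁root] at hchord
    have h' := mul_le_mul_of_nonneg_right hchord hθpos.le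
    have hrw : φ₁ / θs * f θs * θs = φ₁ * f θs := by
      field_simp
    rw [hrw] at h'
    have h2 : (D/κ) * θs < (D/κ) * (3*Real.pi/(4*(2*γ-1)) * f θs) :=
      mul_lt_mul_of_pos_left hK hcval
    have h3 : φ₁ * f θs < (3*Real.pi/(4*(2*γ-1)) * (D/κ)) * f θs := by
      calc φ₁ * f θs ≤ (D/κ) * θs := h'
      _ < (D/κ) * (3*Real.pi/(4*(2*γ-1)) * f θs) := h2
      _ = (3*Real.pi/(4*(2*γ-1)) * (D/κ)) * f θs := by ring
    exact lt_of_mul_lt_mul_right h3 hfθpos.le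
  exact ⟨hP1, hP2, hP3⟩
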